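/- Let X and Y be n×n complex Hermitian positive definite matrices and let X̄ and Ȳ be their realifications (real symmetric positive definite 2n×2n matrices). Then qre(X̄, Ȳ) = 2 · qre(X, Y), where qre(A, B) := Tr(A ln(A)) − Tr(A ln(B)) and ln is the matrix extension of the natural logarithm. -/

import Mathlib

open Matrix
open scoped ComplexOrder

/-- The matrix extension `F` of `f : ℝ → ℝ`: for Hermitian (or real symmetric)
`A = U Diag(λ) U*`, `F(A) := U Diag(f(λᵢ)) U*` (junk value `0` if `A` is not Hermitian).
In particular `matExt Real.log M` is the matrix logarithm `ln(M)` of a positive definite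
matrix `M`. -/
noncomputable def matExt {𝕜 : Type*} [RCLike 𝕜] {n : Type*} [Fintype n] [DecidableEq n]
    (f : ℝ → ℝ) (A : Matrix n n 𝕜) : Matrix n n 𝕜 :=
  if hA : A.IsHermitian then
    (hA.eigenvectorUnitary : Matrix n n 𝕜) *
      Matrix.diagonal (fun i => (f (hA.eigenvalues i) : 𝕜)) *
      star (hA.eigenvectorUnitary : Matrix n n 𝕜)
  else 0

/-- The quantum relative entropy `qre(A,B) := Tr(A ln A − A ln B)` of positive definite
matrices `A`, `B`. -/
noncomputable def qre {𝕜 : Type*} [RCLike 𝕜] {n : Type*} [Fintype n] [DecidableEq n]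
    (A B : Matrix n n 𝕜) : 𝕜 :=
  (A * matExt Real.log A - A * matExt Real.log B).trace

/-- The realification of a complex `n×n` matrix `X = X_r + i X_i`: the real `2n×2n` block
matrix `[[X_r, −X_i],[X_i, X_r]]`. -/
def realify {n : ℕ} (X : Matrix (Fin n) (Fin n) ℂ) :
    Matrix (Fin n ⊕ Fin n) (Fin n ⊕ Fin n) ℝ :=
  Matrix.fromBlocks (X.map Complex.re) (-(X.map Complex.im))
    (X.map Complex.im) (X.map Complex.re)

section Aux

open Polynomial

variable {𝕜 : Type*} [RCLike 𝕜] {n : Type*} [Fintype n] [DecidableEq n]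

/-- Conjugation by a unitary matrix, as an `ℝ`-algebra homomorphism. -/
noncomputable def unitaryConj (u : Matrix.unitaryGroup n 𝕜) :
    Matrix n n 𝕜 →ₐ[ℝ] Matrix n n 𝕜 where
  toFun M := (u : Matrix n n 𝕜) * M * star (u : Matrix n n 𝕜)
  map_one' := by
    show (u : Matrix n n 𝕜) * 1 * star (u : Matrix n n 𝕜) = 1
    rw [mul_one, Matrix.mem_unitaryGroup_iff.mp u.2]
  map_mul' M N := by
    have h : star (u : Matrix n n 𝕜) * (u : Matrix n n 𝕜) = 1 :=
      Matrix.mem_unitaryGroup_iff'.mp u.2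
    show (u : Matrix n n 𝕜) * (M * N) * star (u : Matrix n n 𝕜) =
      ((u : Matrix n n 𝕜) * M * star (u : Matrix n n 𝕜)) *
        ((u : Matrix n n 𝕜) * N * star (u : Matrix n n 𝕜))
    rw [show ((u : Matrix n n 𝕜) * M * star (u : Matrix n n 𝕜)) *
        ((u : Matrix n n 𝕜) * N * star (u : Matrix n n 𝕜)) =
        (u : Matrix n n 𝕜) * M * (star (u : Matrix n n 𝕜) * (u : Matrix n n 𝕜)) *
          (N * star (u : Matrix n n 𝕜)) from by noncomm_ring, h, mul_one]
    noncomm_ring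
  map_zero' := by
    show (u : Matrix n n 𝕜) * 0 * star (u : Matrix n n 𝕜) = 0
    rw [mul_zero, zero_mul]
  map_add' M N := by
    show (u : Matrix n n 𝕜) * (M + N) * star (u : Matrix n n 𝕜) = _
    rw [mul_add, add_mul]
  commutes' r := by
    show (u : Matrix n n 𝕜) * algebraMap ℝ (Matrix n n 𝕜) r * star (u : Matrix n n 𝕜) = _
    rw [Algebra.algebraMap_eq_smul_one, mul_smul_comm, smul_mul_assoc, mul_one,
      Matrix.mem_unitaryGroup_iff.mp u.2]

/-- If a real polynomial `p` agrees with `f` on the eigenvalues of a Hermitian matrix `A`,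
then the matrix extension of `f` at `A` equals `p(A)`. -/
theorem matExt_eq_aeval (f : ℝ → ℝ) (A : Matrix n n 𝕜) (hA : A.IsHermitian)
    (p : ℝ[X]) (hp : ∀ i, p.eval (hA.eigenvalues i) = f (hA.eigenvalues i)) :
    matExt f A = Polynomial.aeval A p := by
  have hdiag : Polynomial.aeval
      (Matrix.diagonal (RCLike.ofReal ∘ hA.eigenvalues) : Matrix n n 𝕜) p =
      Matrix.diagonal (fun i => ((p.eval (hA.eigenvalues i) : ℝ) : 𝕜)) := by
    rw [show (Matrix.diagonal (RCLike.ofReal ∘ hA.eigenvalues) : Matrix n n 𝕜) =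
        Matrix.diagonalAlgHom (n := n) (α := 𝕜) ℝ
          (fun i => algebraMap ℝ 𝕜 (hA.eigenvalues i)) from rfl,
      Polynomial.aeval_algHom_apply]
    have hv : Polynomial.aeval (fun i => algebraMap ℝ 𝕜 (hA.eigenvalues i)) p =
        fun i => ((p.eval (hA.eigenvalues i) : ℝ) : 𝕜) := by
      funext i
      calc (Polynomial.aeval (fun i => algebraMap ℝ 𝕜 (hA.eigenvalues i)) p) i
          = Polynomial.aeval (algebraMap ℝ 𝕜 (hA.eigenvalues i)) p :=
            (Polynomial.aeval_algHom_apply (Pi.evalAlgHom ℝ (fun _ : n => 𝕜) i)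
              (fun i => algebraMap ℝ 𝕜 (hA.eigenvalues i)) p).symm
        _ = ((p.eval (hA.eigenvalues i) : ℝ) : 𝕜) := by
            rw [Polynomial.aeval_algebraMap_apply_eq_algebraMap_eval]
    rw [hv]
    rfl
  have hspec : A = unitaryConj hA.eigenvectorUnitary
      (Matrix.diagonal (RCLike.ofReal ∘ hA.eigenvalues)) := hA.spectral_theorem
  rw [matExt, dif_pos hA]
  conv_rhs => rw [hspec, Polynomial.aeval_algHom_apply, hdiag]
  have hfp : (fun i => ((f (hA.eigenvalues i) : ℝ) : 𝕜)) =
      fun i => ((p.eval (hA.eigenvalues i) : ℝ) : 𝕜) := funext fun i => by rw [hp i]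
  show (hA.eigenvectorUnitary : Matrix n n 𝕜) * _ * star (hA.eigenvectorUnitary : Matrix n n 𝕜)
      = (hA.eigenvectorUnitary : Matrix n n 𝕜) * _ *
        star (hA.eigenvectorUnitary : Matrix n n 𝕜)
  rw [hfp]

/-- The matrix extension of a Hermitian matrix is Hermitian. -/
theorem matExt_isHermitian (f : ℝ → ℝ) {A : Matrix n n 𝕜} (hA : A.IsHermitian) :
    (matExt f A).IsHermitian := by
  rw [matExt, dif_pos hA]
  have hD : (Matrix.diagonal (fun i => ((f (hA.eigenvalues i) : ℝ) : 𝕜)))ᴴ =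
      Matrix.diagonal (fun i => ((f (hA.eigenvalues i) : ℝ) : 𝕜)) := by
    rw [Matrix.diagonal_conjTranspose,
      show (star fun i => ((f (hA.eigenvalues i) : ℝ) : 𝕜)) =
        fun i => ((f (hA.eigenvalues i) : ℝ) : 𝕜) from
        funext fun i => RCLike.conj_ofReal _]
  show _ᴴ = _
  rw [Matrix.conjTranspose_mul, Matrix.conjTranspose_mul, hD,
    Matrix.star_eq_conjTranspose, Matrix.conjTranspose_conjTranspose, Matrix.mul_assoc]

theorem trace_mul_isHermitian_star {A H : Matrix n n 𝕜} (hA : A.IsHermitian)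
    (hH : H.IsHermitian) : star (A * H).trace = (A * H).trace := by
  rw [← Matrix.trace_conjTranspose, Matrix.conjTranspose_mul, hA.eq, hH.eq,
    Matrix.trace_mul_comm]

end Aux

section Realify

open Polynomial

variable {n : ℕ}

/-- Realification, as an `ℝ`-algebra homomorphism. -/
def realifyAlgHom (n : ℕ) :
    Matrix (Fin n) (Fin n) ℂ →ₐ[ℝ] Matrix (Fin n ⊕ Fin n) (Fin n ⊕ Fin n) ℝ where
  toFun := realify
  map_one' := by
    ext (i | i) (j | j) <;>
      simp [realify, Matrix.one_apply, apply_ite Complex.re, apply_ite Complex.im]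
  map_mul' M N := by
    ext (i | i) (j | j) <;>
      simp [realify, Matrix.fromBlocks_multiply, Matrix.mul_apply, Complex.mul_re,
        Complex.mul_im, Finset.sum_add_distrib, Finset.sum_sub_distrib, sub_eq_add_neg] <;>
      ring
  map_zero' := by
    ext (i | i) (j | j) <;> simp [realify]
  map_add' M N := by
    ext (i | i) (j | j) <;> simp [realify] <;> ring
  commutes' r := by
    ext (i | i) (j | j) <;>
      simp [realify, Matrix.algebraMap_matrix_apply, apply_ite Complex.re,
        apply_ite Complex.im]

theorem realify_isHermitian {X : Matrix (Fin n) (Fin n) ℂ} (hX : X.IsHermitian) :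
    (realify X).IsHermitian := by
  have h : ∀ i j, star (X j i) = X i j := hX.apply
  apply Matrix.IsHermitian.ext
  rintro (i | i) (j | j) <;>
    simp only [realify, Matrix.fromBlocks_apply₁₁, Matrix.fromBlocks_apply₁₂,
      Matrix.fromBlocks_apply₂₁, Matrix.fromBlocks_apply₂₂, Matrix.map_apply,
      Matrix.neg_apply, star_trivial] <;>
    rw [← h i j] <;> simp [Complex.star_def]

theorem trace_realify (M : Matrix (Fin n) (Fin n) ℂ) :
    (realify M).trace = 2 * M.trace.re := by
  simp [Matrix.trace, realify, Fintype.sum_sum_type, Matrix.diag, Complex.re_sum, two_mul]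

theorem matExt_log_realify {X : Matrix (Fin n) (Fin n) ℂ} (hX : X.IsHermitian) :
    matExt Real.log (realify X) = realify (matExt Real.log X) := by
  have hXr : (realify X).IsHermitian := realify_isHermitian hX
  classical
  set s : Finset ℝ :=
    Finset.image hX.eigenvalues Finset.univ ∪ Finset.image hXr.eigenvalues Finset.univ with hs
  set p : ℝ[X] := Lagrange.interpolate s id Real.log with hpdef
  have hps : ∀ x ∈ s, p.eval x = Real.log x := fun x hx => by
    rw [hpdef]; exact Lagrange.eval_interpolate_at_node Real.log (Set.injOn_id _) hx
  rw [matExt_eq_aeval Real.log X hX p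
      (fun i => hps _ (by simp [hs])),
    matExt_eq_aeval Real.log (realify X) hXr p
      (fun i => hps _ (by simp [hs]))]
  exact (Polynomial.aeval_algHom_apply (realifyAlgHom n) X p).symm ▸ rfl

end Realify

/-- For complex Hermitian positive definite `X`, `Y`, the quantity `qre(X,Y)` is a real
number and `qre(X̄, Ȳ) = 2 qre(X,Y)`, where `X̄, Ȳ` are the realifications of `X, Y`. -/
theorem qre_realify {n : ℕ} (X Y : Matrix (Fin n) (Fin n) ℂ)
    (hX : X.PosDef) (hY : Y.PosDef) :
    (qre X Y).im = 0 ∧ qre (realify X) (realify Y) = 2 * (qre X Y).re := by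
  have hXh := hX.1
  have hYh := hY.1
  constructor
  · have hstar : star (qre X Y) = qre X Y := by
      rw [qre, Matrix.trace_sub, star_sub,
        trace_mul_isHermitian_star hXh (matExt_isHermitian _ hXh),
        trace_mul_isHermitian_star hXh (matExt_isHermitian _ hYh)]
    have := Complex.conj_eq_iff_im.mp hstar
    exact this
  · rw [qre, qre, matExt_log_realify hXh, matExt_log_realify hYh,
      show realify X * realify (matExt Real.log X) = realify (X * matExt Real.log X) from
        (map_mul (realifyAlgHom n) X (matExt Real.log X)).symm,
      show realify X * realify (matExt Real.log Y) = realify (X * matExt Real.log Y) from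
        (map_mul (realifyAlgHom n) X (matExt Real.log Y)).symm,
      show realify (X * matExt Real.log X) - realify (X * matExt Real.log Y) =
        realify (X * matExt Real.log X - X * matExt Real.log Y) from
        (map_sub (realifyAlgHom n) _ _).symm,
      trace_realify]
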